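/- Let G = ℝ^d ⊕ so(d) with group law (x,A)·(y,B) = (x+y, A+B+(x⊗y−y⊗x)/2), and let ξ_1, …, ξ_k be i.i.d. G-valued random variables, ξ_i = (x_i, A_i), with E[x_i] = 0, E[|x_i|^4] < ∞ and E[|A_i|^2] < ∞. Let (S_k, Γ_k) = ξ_1 · ξ_2 ⋯ ξ_k. Then E[|S_k|^4] = O(k^2) and E[|Γ_k|^2] = O(k^2); consequently E[‖(S_k, Γ_k)‖^4] = O(k^2) for the homogeneous norm ‖(x,A)‖ = max(|x|, |A|^{1/2}). -/

import Mathlib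

open MeasureTheory ProbabilityTheory

/-- Outer (tensor) product of two vectors. -/
def outer {d : ℕ} (v w : Fin d → ℝ) : Fin d → Fin d → ℝ := fun i j => v i * w j

/-- Group law on `ℝ^d ⊕ so(d)` in log-coordinates:
`(x, A) · (y, B) = (x + y, A + B + (x⊗y − y⊗x)/2)`. -/
noncomputable def gmul {d : ℕ} (g h : (Fin d → ℝ) × (Fin d → Fin d → ℝ)) :
    (Fin d → ℝ) × (Fin d → Fin d → ℝ) :=
  (g.1 + h.1, g.2 + h.2 + (1 / 2 : ℝ) • (outer g.1 h.1 - outer h.1 g.1))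

/-- The homogeneous norm `‖(x, A)‖ = max(|x|, |A|^{1/2})`. -/
noncomputable def gnorm {d : ℕ} (g : (Fin d → ℝ) × (Fin d → Fin d → ℝ)) : ℝ :=
  max ‖g.1‖ (Real.sqrt ‖g.2‖)


open MeasureTheory ProbabilityTheory Finset

-- AM-GM style helpers
lemma sw_absmul (a b : ℝ) : |a * b| ≤ (a^2 + b^2)/2 := by
  rcases abs_cases (a*b) with ⟨h,_⟩|⟨h,_⟩ <;> nlinarith [sq_nonneg (a-b), sq_nonneg (a+b)]

lemma sw_abs4 (w x y z : ℝ) : |w * x * y * z| ≤ w^4 + x^4 + y^4 + z^4 := by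
  have h1 : |(w*x) * (y*z)| ≤ ((w*x)^2 + (y*z)^2)/2 := sw_absmul _ _
  have h2 : (w*x)^2 ≤ (w^4 + x^4)/2 := by nlinarith [sq_nonneg (w^2 - x^2)]
  have h3 : (y*z)^2 ≤ (y^4 + z^4)/2 := by nlinarith [sq_nonneg (y^2 - z^2)]
  calc |w * x * y * z| = |(w*x) * (y*z)| := by ring_nf
    _ ≤ ((w*x)^2 + (y*z)^2)/2 := h1
    _ ≤ w^4 + x^4 + y^4 + z^4 := by nlinarith

lemma sw_diagZ (a b a' b' ni nj : ℝ) (h1 : a^2 ≤ ni^2) (h2 : a'^2 ≤ ni^2)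
    (h3 : b^2 ≤ nj^2) (h4 : b'^2 ≤ nj^2) :
    (a*b' - a'*b)^2 ≤ 2*(ni^4 + nj^4) := by
  have k1 : a^2 * b'^2 ≤ ni^2 * nj^2 := mul_le_mul h1 h4 (sq_nonneg _) (by positivity)
  have k2 : a'^2 * b^2 ≤ ni^2 * nj^2 := mul_le_mul h2 h3 (sq_nonneg _) (by positivity)
  nlinarith [sq_nonneg (a*b' + a'*b), sq_nonneg (ni^2 - nj^2)]

-- pi norm bound
lemma sw_pi_pow {n : ℕ} {E : Type*} [NormedAddCommGroup E] (v : Fin n → E) (m : ℕ) (hm : m ≠ 0) :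
    ‖v‖ ^ m ≤ ∑ i, ‖v i‖ ^ m := by
  rcases isEmpty_or_nonempty (Fin n) with h | h
  · simp [Pi.norm_def, zero_pow hm]
  · obtain ⟨i, -, hi⟩ := Finset.exists_mem_eq_sup Finset.univ univ_nonempty (fun i => ‖v i‖₊)
    have hv : ‖v‖ = ‖v i‖ := by
      rw [Pi.norm_def, hi]; rfl
    rw [hv]
    exact Finset.single_le_sum (f := fun i => ‖v i‖ ^ m) (fun j _ => by positivity) (mem_univ i)

lemma sw_sq_sum (f : ℕ → ℝ) (k : ℕ) :
    (∑ n ∈ Finset.range k, f n)^2 =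
      ∑ n ∈ Finset.range k, f n^2 + 2 * ∑ j ∈ Finset.range k, ∑ i ∈ Finset.range j, f i * f j := by
  induction k with
  | zero => simp
  | succ k ih =>
    rw [Finset.sum_range_succ, Finset.sum_range_succ (f := fun n => f n ^ 2),
      Finset.sum_range_succ (f := fun j => ∑ i ∈ Finset.range j, f i * f j), ← Finset.sum_mul]
    nlinarith [ih]

section SW
variable {Ω : Type*} [MeasurableSpace Ω] {μ : Measure Ω} [IsProbabilityMeasure μ]
  {d : ℕ} {ξ : ℕ → Ω → (Fin d → ℝ) × (Fin d → Fin d → ℝ)}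

lemma sw_mcoord (hmeas : ∀ n, Measurable (ξ n)) (n : ℕ) (l : Fin d) :
    Measurable (fun ω => (ξ n ω).1 l) :=
  (measurable_pi_apply l).comp (measurable_fst.comp (hmeas n))

lemma sw_int_x4 (hident : ∀ n, IdentDistrib (ξ n) (ξ 0) μ μ)
    (hx4 : Integrable (fun ω => ‖(ξ 0 ω).1‖ ^ 4) μ) (n : ℕ) :
    Integrable (fun ω => ‖(ξ n ω).1‖ ^ 4) μ := by
  have h := (hident n).comp
    (show Measurable (fun p : (Fin d → ℝ) × (Fin d → Fin d → ℝ) => ‖p.1‖^4) by fun_prop)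
  exact h.integrable_iff.mpr hx4

lemma sw_val_x4 (hident : ∀ n, IdentDistrib (ξ n) (ξ 0) μ μ) (n : ℕ) :
    ∫ ω, ‖(ξ n ω).1‖ ^ 4 ∂μ = ∫ ω, ‖(ξ 0 ω).1‖ ^ 4 ∂μ := by
  have h := (hident n).comp
    (show Measurable (fun p : (Fin d → ℝ) × (Fin d → Fin d → ℝ) => ‖p.1‖^4) by fun_prop)
  exact h.integral_eq

lemma sw_int_A2 (hident : ∀ n, IdentDistrib (ξ n) (ξ 0) μ μ)
    (hA2 : Integrable (fun ω => ‖(ξ 0 ω).2‖ ^ 2) μ) (n : ℕ) :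
    Integrable (fun ω => ‖(ξ n ω).2‖ ^ 2) μ := by
  have h := (hident n).comp
    (show Measurable (fun p : (Fin d → ℝ) × (Fin d → Fin d → ℝ) => ‖p.2‖^2) by fun_prop)
  exact h.integrable_iff.mpr hA2

lemma sw_val_A2 (hident : ∀ n, IdentDistrib (ξ n) (ξ 0) μ μ) (n : ℕ) :
    ∫ ω, ‖(ξ n ω).2‖ ^ 2 ∂μ = ∫ ω, ‖(ξ 0 ω).2‖ ^ 2 ∂μ := by
  have h := (hident n).comp
    (show Measurable (fun p : (Fin d → ℝ) × (Fin d → Fin d → ℝ) => ‖p.2‖^2) by fun_prop)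
  exact h.integral_eq

lemma sw_cent (hident : ∀ n, IdentDistrib (ξ n) (ξ 0) μ μ)
    (hcentered : ∀ l : Fin d, ∫ ω, (ξ 0 ω).1 l ∂μ = 0) (n : ℕ) (l : Fin d) :
    ∫ ω, (ξ n ω).1 l ∂μ = 0 := by
  have h := (hident n).comp
    (show Measurable (fun p : (Fin d → ℝ) × (Fin d → Fin d → ℝ) => p.1 l) by fun_prop)
  rw [show (∫ ω, (ξ n ω).1 l ∂μ) = ∫ ω, (ξ 0 ω).1 l ∂μ from h.integral_eq]
  exact hcentered l

lemma sw_coord_le (v : Fin d → ℝ) (l : Fin d) : |v l| ≤ ‖v‖ := by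
  rw [← Real.norm_eq_abs]; exact norm_le_pi_norm v l

-- Integrability of products of 4 coordinates
lemma sw_int_prod4 (hmeas : ∀ n, Measurable (ξ n))
    (hident : ∀ n, IdentDistrib (ξ n) (ξ 0) μ μ)
    (hx4 : Integrable (fun ω => ‖(ξ 0 ω).1‖ ^ 4) μ)
    (a b c e : ℕ) (la lb lc le : Fin d) :
    Integrable (fun ω => (ξ a ω).1 la * (ξ b ω).1 lb * (ξ c ω).1 lc * (ξ e ω).1 le) μ := by
  have hg : Integrable (fun ω => ‖(ξ a ω).1‖^4 + ‖(ξ b ω).1‖^4 + ‖(ξ c ω).1‖^4 + ‖(ξ e ω).1‖^4) μ :=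
    (((sw_int_x4 hident hx4 a).add (sw_int_x4 hident hx4 b)).add (sw_int_x4 hident hx4 c)).add
      (sw_int_x4 hident hx4 e)
  refine hg.mono ?_ (Filter.Eventually.of_forall fun ω => ?_)
  · exact ((((sw_mcoord hmeas a la).mul (sw_mcoord hmeas b lb)).mul
      (sw_mcoord hmeas c lc)).mul (sw_mcoord hmeas e le)).aestronglyMeasurable
  · have h1 := sw_coord_le ((ξ a ω).1) la
    have h2 := sw_coord_le ((ξ b ω).1) lb
    have h3 := sw_coord_le ((ξ c ω).1) lc
    have h4 := sw_coord_le ((ξ e ω).1) le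
    have hc : |(ξ a ω).1 la * (ξ b ω).1 lb * (ξ c ω).1 lc * (ξ e ω).1 le|
        ≤ ‖(ξ a ω).1‖ * ‖(ξ b ω).1‖ * ‖(ξ c ω).1‖ * ‖(ξ e ω).1‖ := by
      rw [abs_mul, abs_mul, abs_mul]
      gcongr <;> positivity
    have h5 := sw_abs4 ‖(ξ a ω).1‖ ‖(ξ b ω).1‖ ‖(ξ c ω).1‖ ‖(ξ e ω).1‖
    rw [abs_of_nonneg (by positivity)] at h5
    simp only [Real.norm_eq_abs]
    rw [abs_of_nonneg (by positivity : (0:ℝ) ≤ ‖(ξ a ω).1‖^4 + ‖(ξ b ω).1‖^4 + ‖(ξ c ω).1‖^4 + ‖(ξ e ω).1‖^4)]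
    exact hc.trans h5

lemma sw_int_prod3 (hmeas : ∀ n, Measurable (ξ n))
    (hident : ∀ n, IdentDistrib (ξ n) (ξ 0) μ μ)
    (hx4 : Integrable (fun ω => ‖(ξ 0 ω).1‖ ^ 4) μ)
    (a b c : ℕ) (la lb lc : Fin d) :
    Integrable (fun ω => (ξ a ω).1 la * (ξ b ω).1 lb * (ξ c ω).1 lc) μ := by
  have hg : Integrable (fun ω => ‖(ξ a ω).1‖^4 + ‖(ξ b ω).1‖^4 + ‖(ξ c ω).1‖^4 + 1) μ :=
    (((sw_int_x4 hident hx4 a).add (sw_int_x4 hident hx4 b)).add (sw_int_x4 hident hx4 c)).add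
      (integrable_const 1)
  refine hg.mono ?_ (Filter.Eventually.of_forall fun ω => ?_)
  · exact (((sw_mcoord hmeas a la).mul (sw_mcoord hmeas b lb)).mul
      (sw_mcoord hmeas c lc)).aestronglyMeasurable
  · have h1 := sw_coord_le ((ξ a ω).1) la
    have h2 := sw_coord_le ((ξ b ω).1) lb
    have h3 := sw_coord_le ((ξ c ω).1) lc
    have hc : |(ξ a ω).1 la * (ξ b ω).1 lb * (ξ c ω).1 lc|
        ≤ ‖(ξ a ω).1‖ * ‖(ξ b ω).1‖ * ‖(ξ c ω).1‖ * 1 := by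
      rw [abs_mul, abs_mul]
      calc |(ξ a ω).1 la| * |(ξ b ω).1 lb| * |(ξ c ω).1 lc|
          ≤ ‖(ξ a ω).1‖ * ‖(ξ b ω).1‖ * ‖(ξ c ω).1‖ := by gcongr <;> positivity
        _ = ‖(ξ a ω).1‖ * ‖(ξ b ω).1‖ * ‖(ξ c ω).1‖ * 1 := by ring
    have h5 := sw_abs4 ‖(ξ a ω).1‖ ‖(ξ b ω).1‖ ‖(ξ c ω).1‖ 1
    rw [abs_of_nonneg (by positivity)] at h5
    simp only [Real.norm_eq_abs]
    rw [abs_of_nonneg (by positivity : (0:ℝ) ≤ ‖(ξ a ω).1‖^4 + ‖(ξ b ω).1‖^4 + ‖(ξ c ω).1‖^4 + 1)]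
    calc |(ξ a ω).1 la * (ξ b ω).1 lb * (ξ c ω).1 lc|
        ≤ ‖(ξ a ω).1‖ * ‖(ξ b ω).1‖ * ‖(ξ c ω).1‖ * 1 := hc
      _ ≤ ‖(ξ a ω).1‖^4 + ‖(ξ b ω).1‖^4 + ‖(ξ c ω).1‖^4 + 1^4 := h5
      _ = ‖(ξ a ω).1‖^4 + ‖(ξ b ω).1‖^4 + ‖(ξ c ω).1‖^4 + 1 := by norm_num

lemma sw_int_prod1 (hmeas : ∀ n, Measurable (ξ n))
    (hident : ∀ n, IdentDistrib (ξ n) (ξ 0) μ μ)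
    (hx4 : Integrable (fun ω => ‖(ξ 0 ω).1‖ ^ 4) μ)
    (e : ℕ) (le : Fin d) :
    Integrable (fun ω => (ξ e ω).1 le) μ := by
  have hg : Integrable (fun ω => ‖(ξ e ω).1‖^4 + 3) μ :=
    (sw_int_x4 hident hx4 e).add (integrable_const 3)
  refine hg.mono ((sw_mcoord hmeas e le)).aestronglyMeasurable
    (Filter.Eventually.of_forall fun ω => ?_)
  have h5 := sw_abs4 ‖(ξ e ω).1‖ 1 1 1
  rw [abs_of_nonneg (by positivity)] at h5
  simp only [Real.norm_eq_abs]
  rw [abs_of_nonneg (by positivity : (0:ℝ) ≤ ‖(ξ e ω).1‖^4 + 3)]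
  calc |(ξ e ω).1 le| ≤ ‖(ξ e ω).1‖ := sw_coord_le _ _
    _ = ‖(ξ e ω).1‖ * 1 * 1 * 1 := by ring
    _ ≤ ‖(ξ e ω).1‖^4 + 1^4 + 1^4 + 1^4 := h5
    _ = ‖(ξ e ω).1‖^4 + 3 := by ring

end SW

section SW2
variable {Ω : Type*} [MeasurableSpace Ω] {μ : Measure Ω} [IsProbabilityMeasure μ]
  {d : ℕ} {ξ : ℕ → Ω → (Fin d → ℝ) × (Fin d → Fin d → ℝ)}

lemma sw_zero4 (hmeas : ∀ n, Measurable (ξ n))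
    (hindep : iIndepFun ξ μ)
    (hident : ∀ n, IdentDistrib (ξ n) (ξ 0) μ μ)
    (hcentered : ∀ l : Fin d, ∫ ω, (ξ 0 ω).1 l ∂μ = 0)
    (hx4 : Integrable (fun ω => ‖(ξ 0 ω).1‖ ^ 4) μ)
    (a b c e : ℕ) (hea : e ≠ a) (heb : e ≠ b) (hec : e ≠ c)
    (l1 l2 l3 l0 : Fin d) :
    ∫ ω, ((ξ a ω).1 l1 * (ξ b ω).1 l2 * (ξ c ω).1 l3) * (ξ e ω).1 l0 ∂μ = 0 := by
  classical
  have hdis : Disjoint ({a, b, c} : Finset ℕ) ({e} : Finset ℕ) := by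
    simp only [Finset.disjoint_singleton_right, Finset.mem_insert, Finset.mem_singleton]
    push_neg
    exact ⟨hea, heb, hec⟩
  have hIF := hindep.indepFun_finset {a, b, c} {e} hdis hmeas
  have ha : a ∈ ({a, b, c} : Finset ℕ) := by simp
  have hb : b ∈ ({a, b, c} : Finset ℕ) := by simp
  have hc : c ∈ ({a, b, c} : Finset ℕ) := by simp
  have he : e ∈ ({e} : Finset ℕ) := by simp
  set φ : (∀ _ : ({a, b, c} : Finset ℕ), (Fin d → ℝ) × (Fin d → Fin d → ℝ)) → ℝ :=
    fun v => (v ⟨a, ha⟩).1 l1 * (v ⟨b, hb⟩).1 l2 * (v ⟨c, hc⟩).1 l3 with hφ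
  set ψ : (∀ _ : ({e} : Finset ℕ), (Fin d → ℝ) × (Fin d → Fin d → ℝ)) → ℝ :=
    fun v => (v ⟨e, he⟩).1 l0 with hψ
  have hφm : Measurable φ := by fun_prop
  have hψm : Measurable ψ := by fun_prop
  have h2 : IndepFun (fun ω => (ξ a ω).1 l1 * (ξ b ω).1 l2 * (ξ c ω).1 l3)
      (fun ω => (ξ e ω).1 l0) μ := hIF.comp hφm hψm
  have hX : Integrable (fun ω => (ξ a ω).1 l1 * (ξ b ω).1 l2 * (ξ c ω).1 l3) μ :=
    sw_int_prod3 hmeas hident hx4 a b c l1 l2 l3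
  have hY : Integrable (fun ω => (ξ e ω).1 l0) μ := sw_int_prod1 hmeas hident hx4 e l0
  have h3 := h2.integral_mul_eq_mul_integral hX.aestronglyMeasurable hY.aestronglyMeasurable
  calc ∫ ω, ((ξ a ω).1 l1 * (ξ b ω).1 l2 * (ξ c ω).1 l3) * (ξ e ω).1 l0 ∂μ
      = (∫ ω, (ξ a ω).1 l1 * (ξ b ω).1 l2 * (ξ c ω).1 l3 ∂μ) * ∫ ω, (ξ e ω).1 l0 ∂μ := h3
    _ = 0 := by rw [sw_cent hident hcentered e l0, mul_zero]

lemma sw_pf_orth (hmeas : ∀ n, Measurable (ξ n))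
    (hindep : iIndepFun ξ μ)
    (hident : ∀ n, IdentDistrib (ξ n) (ξ 0) μ μ)
    (hcentered : ∀ l : Fin d, ∫ ω, (ξ 0 ω).1 l ∂μ = 0)
    (hx4 : Integrable (fun ω => ‖(ξ 0 ω).1‖ ^ 4) μ)
    {i j i' j' : ℕ} (hij : i < j) (hij' : i' < j') (hne : ¬(i = i' ∧ j = j'))
    (l m l' m' : Fin d) :
    ∫ ω, ((ξ i ω).1 l * (ξ j ω).1 m) * ((ξ i' ω).1 l' * (ξ j' ω).1 m') ∂μ = 0 := by
  have hcases : (i ≠ j ∧ i ≠ i' ∧ i ≠ j') ∨ (j ≠ i ∧ j ≠ i' ∧ j ≠ j') := by omega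
  rcases hcases with ⟨h1, h2, h3⟩ | ⟨h1, h2, h3⟩
  · rw [show (fun ω => ((ξ i ω).1 l * (ξ j ω).1 m) * ((ξ i' ω).1 l' * (ξ j' ω).1 m'))
        = (fun ω => ((ξ j ω).1 m * (ξ i' ω).1 l' * (ξ j' ω).1 m') * (ξ i ω).1 l)
        from funext fun ω => by ring]
    exact sw_zero4 hmeas hindep hident hcentered hx4 j i' j' i h1 h2 h3 m l' m' l
  · rw [show (fun ω => ((ξ i ω).1 l * (ξ j ω).1 m) * ((ξ i' ω).1 l' * (ξ j' ω).1 m'))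
        = (fun ω => ((ξ i ω).1 l * (ξ i' ω).1 l' * (ξ j' ω).1 m') * (ξ j ω).1 m)
        from funext fun ω => by ring]
    exact sw_zero4 hmeas hindep hident hcentered hx4 i i' j' j h1 h2 h3 l l' m' m

lemma sw_orth_sum {ι : Type*} [DecidableEq ι] (s : Finset ι) (Z : ι → Ω → ℝ)
    (hint : ∀ p ∈ s, ∀ q ∈ s, Integrable (fun ω => Z p ω * Z q ω) μ)
    (horth : ∀ p ∈ s, ∀ q ∈ s, p ≠ q → ∫ ω, Z p ω * Z q ω ∂μ = 0)
    (B : ℝ) (hdiag : ∀ p ∈ s, ∫ ω, Z p ω * Z p ω ∂μ ≤ B) :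
    Integrable (fun ω => (∑ p ∈ s, Z p ω)^2) μ ∧
      ∫ ω, (∑ p ∈ s, Z p ω)^2 ∂μ ≤ (s.card : ℝ) * B := by
  have hpt : (fun ω => (∑ p ∈ s, Z p ω)^2)
      = fun ω => ∑ p ∈ s, ∑ q ∈ s, Z p ω * Z q ω := by
    funext ω
    rw [sq, Finset.sum_mul_sum]
  have hI : Integrable (fun ω => ∑ p ∈ s, ∑ q ∈ s, Z p ω * Z q ω) μ :=
    integrable_finset_sum _ (fun p hp => integrable_finset_sum _ (fun q hq => hint p hp q hq))
  refine ⟨hpt ▸ hI, ?_⟩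
  rw [hpt, integral_finset_sum _ (fun p hp => integrable_finset_sum _ (fun q hq => hint p hp q hq))]
  have hinner : ∀ p ∈ s, (∫ ω, ∑ q ∈ s, Z p ω * Z q ω ∂μ) ≤ B := by
    intro p hp
    rw [integral_finset_sum _ (fun q hq => hint p hp q hq)]
    rw [Finset.sum_eq_single_of_mem p hp (fun q hq hqp => horth p hp q hq (Ne.symm hqp))]
    exact hdiag p hp
  calc ∑ p ∈ s, ∫ ω, ∑ q ∈ s, Z p ω * Z q ω ∂μ ≤ ∑ _p ∈ s, B :=
        Finset.sum_le_sum hinner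
    _ = (s.card : ℝ) * B := by rw [Finset.sum_const, nsmul_eq_mul]

end SW2

section SW3
variable {Ω : Type*} [MeasurableSpace Ω] {μ : Measure Ω} [IsProbabilityMeasure μ]
  {d : ℕ} {ξ : ℕ → Ω → (Fin d → ℝ) × (Fin d → Fin d → ℝ)}

lemma sw_int_pairmul (hmeas : ∀ n, Measurable (ξ n))
    (hident : ∀ n, IdentDistrib (ξ n) (ξ 0) μ μ)
    (hx4 : Integrable (fun ω => ‖(ξ 0 ω).1‖ ^ 4) μ)
    (i j i' j' : ℕ) (l m l' m' : Fin d) :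
    Integrable (fun ω => ((ξ i ω).1 l * (ξ j ω).1 m) * ((ξ i' ω).1 l' * (ξ j' ω).1 m')) μ :=
  (sw_int_prod4 hmeas hident hx4 i j i' j' l m l' m').congr
    (Filter.Eventually.of_forall fun ω => by ring)

lemma sw_c4_nonneg : 0 ≤ ∫ ω, ‖(ξ 0 ω).1‖ ^ 4 ∂μ :=
  integral_nonneg fun ω => by positivity

lemma sw_diag_int (hmeas : ∀ n, Measurable (ξ n))
    (hident : ∀ n, IdentDistrib (ξ n) (ξ 0) μ μ)
    (hx4 : Integrable (fun ω => ‖(ξ 0 ω).1‖ ^ 4) μ)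
    (i j : ℕ) (Zij : Ω → ℝ)
    (hpt : ∀ ω, Zij ω * Zij ω ≤ 2 * (‖(ξ i ω).1‖^4 + ‖(ξ j ω).1‖^4)) :
    ∫ ω, Zij ω * Zij ω ∂μ ≤ 4 * ∫ ω, ‖(ξ 0 ω).1‖ ^ 4 ∂μ := by
  have hg : Integrable (fun ω => 2 * (‖(ξ i ω).1‖^4 + ‖(ξ j ω).1‖^4)) μ :=
    ((sw_int_x4 hident hx4 i).add (sw_int_x4 hident hx4 j)).const_mul 2
  calc ∫ ω, Zij ω * Zij ω ∂μ ≤ ∫ ω, 2 * (‖(ξ i ω).1‖^4 + ‖(ξ j ω).1‖^4) ∂μ := by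
        apply integral_mono_of_nonneg (Filter.Eventually.of_forall fun ω => mul_self_nonneg _) hg
          (Filter.Eventually.of_forall hpt)
    _ = 2 * ((∫ ω, ‖(ξ i ω).1‖^4 ∂μ) + ∫ ω, ‖(ξ j ω).1‖^4 ∂μ) := by
        rw [integral_const_mul, integral_add (sw_int_x4 hident hx4 i) (sw_int_x4 hident hx4 j)]
    _ = 4 * ∫ ω, ‖(ξ 0 ω).1‖ ^ 4 ∂μ := by
        rw [sw_val_x4 hident i, sw_val_x4 hident j]; ring

lemma sw_sig_card (k : ℕ) :
    ((((Finset.range k).sigma fun j => Finset.range j).card : ℝ)) ≤ (k:ℝ)^2 := by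
  have h : (((Finset.range k).sigma fun j => Finset.range j).card) ≤ k * k := by
    rw [Finset.card_sigma]
    calc ∑ j ∈ Finset.range k, (Finset.range j).card ≤ ∑ _j ∈ Finset.range k, k :=
          Finset.sum_le_sum fun j hj => by
            rw [Finset.card_range]; exact (Finset.mem_range.mp hj).le
      _ = k * k := by rw [Finset.sum_const, Finset.card_range, smul_eq_mul]
  calc (((Finset.range k).sigma fun j => Finset.range j).card : ℝ) ≤ ((k * k : ℕ) : ℝ) := by
        exact_mod_cast h
    _ = (k:ℝ)^2 := by push_cast; ring

lemma sw_mem_sig {k : ℕ} {p : (_ : ℕ) × ℕ}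
    (hp : p ∈ (Finset.range k).sigma fun j => Finset.range j) : p.2 < p.1 ∧ p.1 < k := by
  rw [Finset.mem_sigma] at hp
  exact ⟨Finset.mem_range.mp hp.2, Finset.mem_range.mp hp.1⟩

lemma sw_sig_ne {p q : (_ : ℕ) × ℕ} (hpq : p ≠ q) : ¬(p.2 = q.2 ∧ p.1 = q.1) := by
  rintro ⟨h1, h2⟩
  exact hpq (Sigma.ext h2 (heq_of_eq h1))

/-- Second moment of `∑_{i<j<k} x_i l · x_j m`. -/
lemma sw_pairZ_sum (hmeas : ∀ n, Measurable (ξ n))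
    (hindep : iIndepFun ξ μ)
    (hident : ∀ n, IdentDistrib (ξ n) (ξ 0) μ μ)
    (hcentered : ∀ l : Fin d, ∫ ω, (ξ 0 ω).1 l ∂μ = 0)
    (hx4 : Integrable (fun ω => ‖(ξ 0 ω).1‖ ^ 4) μ)
    (k : ℕ) (l m : Fin d) :
    Integrable (fun ω => (∑ p ∈ (Finset.range k).sigma (fun j => Finset.range j),
        (ξ p.2 ω).1 l * (ξ p.1 ω).1 m)^2) μ ∧
      ∫ ω, (∑ p ∈ (Finset.range k).sigma (fun j => Finset.range j),
        (ξ p.2 ω).1 l * (ξ p.1 ω).1 m)^2 ∂μ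
        ≤ (k:ℝ)^2 * (4 * ∫ ω, ‖(ξ 0 ω).1‖ ^ 4 ∂μ) := by
  obtain ⟨hI, hB⟩ := sw_orth_sum (μ := μ) ((Finset.range k).sigma fun j => Finset.range j)
    (fun p ω => (ξ p.2 ω).1 l * (ξ p.1 ω).1 m)
    (fun p _ q _ => sw_int_pairmul hmeas hident hx4 p.2 p.1 q.2 q.1 l m l m)
    (fun p hp q hq hpq => sw_pf_orth hmeas hindep hident hcentered hx4
      (sw_mem_sig hp).1 (sw_mem_sig hq).1 (sw_sig_ne hpq) l m l m)
    (4 * ∫ ω, ‖(ξ 0 ω).1‖ ^ 4 ∂μ)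
    (fun p hp => sw_diag_int hmeas hident hx4 p.2 p.1 _ (fun ω => by
      beta_reduce
      have h1 : ((ξ p.2 ω).1 l)^2 ≤ ‖(ξ p.2 ω).1‖^2 := by
        have := sw_coord_le ((ξ p.2 ω).1) l
        nlinarith [abs_nonneg ((ξ p.2 ω).1 l), sq_abs ((ξ p.2 ω).1 l)]
      have h3 : ((ξ p.1 ω).1 m)^2 ≤ ‖(ξ p.1 ω).1‖^2 := by
        have := sw_coord_le ((ξ p.1 ω).1) m
        nlinarith [abs_nonneg ((ξ p.1 ω).1 m), sq_abs ((ξ p.1 ω).1 m)]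
      have := sw_diagZ ((ξ p.2 ω).1 l) (0:ℝ) (0:ℝ) ((ξ p.1 ω).1 m)
        ‖(ξ p.2 ω).1‖ ‖(ξ p.1 ω).1‖ h1 (by simpa using sq_nonneg ‖(ξ p.2 ω).1‖)
        (by simpa using sq_nonneg ‖(ξ p.1 ω).1‖) h3
      nlinarith [this]))
  refine ⟨hI, hB.trans ?_⟩
  have hc4 : 0 ≤ 4 * ∫ ω, ‖(ξ 0 ω).1‖ ^ 4 ∂μ := by
    have := sw_c4_nonneg (μ := μ) (ξ := ξ)
    linarith
  exact mul_le_mul_of_nonneg_right (sw_sig_card k) hc4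

/-- Second moment of `∑_{i<j<k} (x_i l · x_j m - x_i m · x_j l)`. -/
lemma sw_asymZ_sum (hmeas : ∀ n, Measurable (ξ n))
    (hindep : iIndepFun ξ μ)
    (hident : ∀ n, IdentDistrib (ξ n) (ξ 0) μ μ)
    (hcentered : ∀ l : Fin d, ∫ ω, (ξ 0 ω).1 l ∂μ = 0)
    (hx4 : Integrable (fun ω => ‖(ξ 0 ω).1‖ ^ 4) μ)
    (k : ℕ) (l m : Fin d) :
    Integrable (fun ω => (∑ p ∈ (Finset.range k).sigma (fun j => Finset.range j),
        ((ξ p.2 ω).1 l * (ξ p.1 ω).1 m - (ξ p.2 ω).1 m * (ξ p.1 ω).1 l))^2) μ ∧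
      ∫ ω, (∑ p ∈ (Finset.range k).sigma (fun j => Finset.range j),
        ((ξ p.2 ω).1 l * (ξ p.1 ω).1 m - (ξ p.2 ω).1 m * (ξ p.1 ω).1 l))^2 ∂μ
        ≤ (k:ℝ)^2 * (4 * ∫ ω, ‖(ξ 0 ω).1‖ ^ 4 ∂μ) := by
  obtain ⟨hI, hB⟩ := sw_orth_sum (μ := μ) ((Finset.range k).sigma fun j => Finset.range j)
    (fun p ω => (ξ p.2 ω).1 l * (ξ p.1 ω).1 m - (ξ p.2 ω).1 m * (ξ p.1 ω).1 l)
    (fun p _ q _ => by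
      have h11 := sw_int_pairmul hmeas hident hx4 p.2 p.1 q.2 q.1 l m l m
      have h12 := sw_int_pairmul hmeas hident hx4 p.2 p.1 q.2 q.1 l m m l
      have h21 := sw_int_pairmul hmeas hident hx4 p.2 p.1 q.2 q.1 m l l m
      have h22 := sw_int_pairmul hmeas hident hx4 p.2 p.1 q.2 q.1 m l m l
      exact (((h11.sub h12).sub h21).add h22).congr
        (Filter.Eventually.of_forall fun ω => by
          simp only [Pi.add_apply, Pi.sub_apply, Pi.neg_apply]; ring))
    (fun p hp q hq hpq => by
      have hij := (sw_mem_sig hp).1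
      have hij' := (sw_mem_sig hq).1
      have hne := sw_sig_ne hpq
      have h11 := sw_int_pairmul hmeas hident hx4 p.2 p.1 q.2 q.1 l m l m
      have h12 := sw_int_pairmul hmeas hident hx4 p.2 p.1 q.2 q.1 l m m l
      have h21 := sw_int_pairmul hmeas hident hx4 p.2 p.1 q.2 q.1 m l l m
      have h22 := sw_int_pairmul hmeas hident hx4 p.2 p.1 q.2 q.1 m l m l
      have z11 := sw_pf_orth hmeas hindep hident hcentered hx4 hij hij' hne l m l m
      have z12 := sw_pf_orth hmeas hindep hident hcentered hx4 hij hij' hne l m m l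
      have z21 := sw_pf_orth hmeas hindep hident hcentered hx4 hij hij' hne m l l m
      have z22 := sw_pf_orth hmeas hindep hident hcentered hx4 hij hij' hne m l m l
      rw [show (fun ω => ((ξ p.2 ω).1 l * (ξ p.1 ω).1 m - (ξ p.2 ω).1 m * (ξ p.1 ω).1 l) *
            ((ξ q.2 ω).1 l * (ξ q.1 ω).1 m - (ξ q.2 ω).1 m * (ξ q.1 ω).1 l))
          = fun ω => (((ξ p.2 ω).1 l * (ξ p.1 ω).1 m) * ((ξ q.2 ω).1 l * (ξ q.1 ω).1 m)
              - ((ξ p.2 ω).1 l * (ξ p.1 ω).1 m) * ((ξ q.2 ω).1 m * (ξ q.1 ω).1 l)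
              - ((ξ p.2 ω).1 m * (ξ p.1 ω).1 l) * ((ξ q.2 ω).1 l * (ξ q.1 ω).1 m))
              + ((ξ p.2 ω).1 m * (ξ p.1 ω).1 l) * ((ξ q.2 ω).1 m * (ξ q.1 ω).1 l)
          from funext fun ω => by ring]
      have hAB : Integrable (fun ω => (ξ p.2 ω).1 l * (ξ p.1 ω).1 m * ((ξ q.2 ω).1 l * (ξ q.1 ω).1 m)
          - (ξ p.2 ω).1 l * (ξ p.1 ω).1 m * ((ξ q.2 ω).1 m * (ξ q.1 ω).1 l)) μ := h11.sub h12
      have hABC : Integrable (fun ω => (ξ p.2 ω).1 l * (ξ p.1 ω).1 m * ((ξ q.2 ω).1 l * (ξ q.1 ω).1 m)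
          - (ξ p.2 ω).1 l * (ξ p.1 ω).1 m * ((ξ q.2 ω).1 m * (ξ q.1 ω).1 l)
          - (ξ p.2 ω).1 m * (ξ p.1 ω).1 l * ((ξ q.2 ω).1 l * (ξ q.1 ω).1 m)) μ := hAB.sub h21
      rw [integral_add hABC h22, integral_sub hAB h21,
        integral_sub h11 h12, z11, z12, z21, z22]
      ring)
    (4 * ∫ ω, ‖(ξ 0 ω).1‖ ^ 4 ∂μ)
    (fun p hp => sw_diag_int hmeas hident hx4 p.2 p.1 _ (fun ω => by
      beta_reduce
      have h1 : ((ξ p.2 ω).1 l)^2 ≤ ‖(ξ p.2 ω).1‖^2 := by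
        have := sw_coord_le ((ξ p.2 ω).1) l
        nlinarith [abs_nonneg ((ξ p.2 ω).1 l), sq_abs ((ξ p.2 ω).1 l)]
      have h2 : ((ξ p.2 ω).1 m)^2 ≤ ‖(ξ p.2 ω).1‖^2 := by
        have := sw_coord_le ((ξ p.2 ω).1) m
        nlinarith [abs_nonneg ((ξ p.2 ω).1 m), sq_abs ((ξ p.2 ω).1 m)]
      have h3 : ((ξ p.1 ω).1 l)^2 ≤ ‖(ξ p.1 ω).1‖^2 := by
        have := sw_coord_le ((ξ p.1 ω).1) l
        nlinarith [abs_nonneg ((ξ p.1 ω).1 l), sq_abs ((ξ p.1 ω).1 l)]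
      have h4 : ((ξ p.1 ω).1 m)^2 ≤ ‖(ξ p.1 ω).1‖^2 := by
        have := sw_coord_le ((ξ p.1 ω).1) m
        nlinarith [abs_nonneg ((ξ p.1 ω).1 m), sq_abs ((ξ p.1 ω).1 m)]
      have := sw_diagZ ((ξ p.2 ω).1 l) ((ξ p.1 ω).1 l) ((ξ p.2 ω).1 m)
        ((ξ p.1 ω).1 m) ‖(ξ p.2 ω).1‖ ‖(ξ p.1 ω).1‖ h1 h2 h3 h4
      nlinarith [this]))
  refine ⟨hI, hB.trans ?_⟩
  have hc4 : 0 ≤ 4 * ∫ ω, ‖(ξ 0 ω).1‖ ^ 4 ∂μ := by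
    have := sw_c4_nonneg (μ := μ) (ξ := ξ)
    linarith
  exact mul_le_mul_of_nonneg_right (sw_sig_card k) hc4

end SW3

section SW4
variable {Ω : Type*} [MeasurableSpace Ω] {μ : Measure Ω} [IsProbabilityMeasure μ]
  {d : ℕ} {ξ : ℕ → Ω → (Fin d → ℝ) × (Fin d → Fin d → ℝ)}

lemma sw_outer_sum_left (s : Finset ℕ) (v : ℕ → Fin d → ℝ) (w : Fin d → ℝ) :
    outer (∑ i ∈ s, v i) w = ∑ i ∈ s, outer (v i) w := by
  funext a b
  simp [outer, Finset.sum_apply, Finset.sum_mul]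

lemma sw_outer_sum_right (s : Finset ℕ) (v : ℕ → Fin d → ℝ) (w : Fin d → ℝ) :
    outer w (∑ i ∈ s, v i) = ∑ i ∈ s, outer w (v i) := by
  funext a b
  simp [outer, Finset.sum_apply, Finset.mul_sum]

lemma sw_W (W : ℕ → Ω → (Fin d → ℝ) × (Fin d → Fin d → ℝ))
    (hW : ∀ k ω, W k ω = ((List.range k).map (fun n => ξ n ω)).foldl gmul (0, 0))
    (k : ℕ) (ω : Ω) :
    W k ω = (∑ n ∈ Finset.range k, (ξ n ω).1,
      ∑ n ∈ Finset.range k, (ξ n ω).2 + (1/2 : ℝ) •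
        ∑ j ∈ Finset.range k, ∑ i ∈ Finset.range j,
          (outer (ξ i ω).1 (ξ j ω).1 - outer (ξ j ω).1 (ξ i ω).1)) := by
  induction k with
  | zero => rw [hW]; simp
  | succ k ih =>
    have hstep : W (k+1) ω = gmul (W k ω) (ξ k ω) := by
      rw [hW (k+1), hW k, List.range_succ, List.map_append, List.foldl_append]
      simp
    rw [hstep, ih]
    unfold gmul
    refine Prod.ext ?_ ?_
    · simp [Finset.sum_range_succ]
    · show (∑ n ∈ Finset.range k, (ξ n ω).2 + (1/2 : ℝ) • _) + (ξ k ω).2 + _ = _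
      rw [Finset.sum_range_succ (f := fun n => (ξ n ω).2),
        Finset.sum_range_succ (f := fun j => ∑ i ∈ Finset.range j,
          (outer (ξ i ω).1 (ξ j ω).1 - outer (ξ j ω).1 (ξ i ω).1)),
        sw_outer_sum_left (Finset.range k) (fun i => (ξ i ω).1) ((ξ k ω).1),
        sw_outer_sum_right (Finset.range k) (fun i => (ξ i ω).1) ((ξ k ω).1),
        ← Finset.sum_sub_distrib, smul_add]
      abel

end SW4

section SW5
variable {Ω : Type*} [MeasurableSpace Ω] {μ : Measure Ω} [IsProbabilityMeasure μ]
  {d : ℕ} {ξ : ℕ → Ω → (Fin d → ℝ) × (Fin d → Fin d → ℝ)}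

lemma sw_int_coord4 (hmeas : ∀ n, Measurable (ξ n))
    (hident : ∀ n, IdentDistrib (ξ n) (ξ 0) μ μ)
    (hx4 : Integrable (fun ω => ‖(ξ 0 ω).1‖ ^ 4) μ) (n : ℕ) (l : Fin d) :
    Integrable (fun ω => ((ξ n ω).1 l)^4) μ := by
  refine (sw_int_x4 hident hx4 n).mono
    (((sw_mcoord hmeas n l).pow_const 4).aestronglyMeasurable)
    (Filter.Eventually.of_forall fun ω => ?_)
  rw [Real.norm_eq_abs, Real.norm_eq_abs, abs_of_nonneg (by positivity : (0:ℝ) ≤ ((ξ n ω).1 l)^4),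
    abs_of_nonneg (by positivity : (0:ℝ) ≤ ‖(ξ n ω).1‖^4)]
  have := sw_coord_le ((ξ n ω).1) l
  have h0 := abs_nonneg ((ξ n ω).1 l)
  calc ((ξ n ω).1 l)^4 = |(ξ n ω).1 l|^4 := by rw [← abs_pow, abs_of_nonneg (by positivity)]
    _ ≤ ‖(ξ n ω).1‖^4 := by gcongr

lemma sw_val_coord4 (hmeas : ∀ n, Measurable (ξ n))
    (hident : ∀ n, IdentDistrib (ξ n) (ξ 0) μ μ)
    (hx4 : Integrable (fun ω => ‖(ξ 0 ω).1‖ ^ 4) μ) (n : ℕ) (l : Fin d) :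
    ∫ ω, ((ξ n ω).1 l)^4 ∂μ ≤ ∫ ω, ‖(ξ 0 ω).1‖ ^ 4 ∂μ := by
  rw [← sw_val_x4 hident n]
  refine integral_mono_of_nonneg (Filter.Eventually.of_forall fun ω => by positivity)
    (sw_int_x4 hident hx4 n) (Filter.Eventually.of_forall fun ω => ?_)
  have := sw_coord_le ((ξ n ω).1) l
  have h0 := abs_nonneg ((ξ n ω).1 l)
  calc ((ξ n ω).1 l)^4 = |(ξ n ω).1 l|^4 := by rw [← abs_pow, abs_of_nonneg (by positivity)]
    _ ≤ ‖(ξ n ω).1‖^4 := by gcongr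

lemma sw_S4 (hmeas : ∀ n, Measurable (ξ n))
    (hindep : iIndepFun ξ μ)
    (hident : ∀ n, IdentDistrib (ξ n) (ξ 0) μ μ)
    (hcentered : ∀ l : Fin d, ∫ ω, (ξ 0 ω).1 l ∂μ = 0)
    (hx4 : Integrable (fun ω => ‖(ξ 0 ω).1‖ ^ 4) μ) (k : ℕ) (l : Fin d) :
    Integrable (fun ω => (∑ n ∈ Finset.range k, (ξ n ω).1 l)^4) μ ∧
      ∫ ω, (∑ n ∈ Finset.range k, (ξ n ω).1 l)^4 ∂μ
        ≤ 34 * (∫ ω, ‖(ξ 0 ω).1‖ ^ 4 ∂μ) * (k:ℝ)^2 := by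
  obtain ⟨hP2, hP2val⟩ := sw_pairZ_sum hmeas hindep hident hcentered hx4 k l l
  have hQm : Measurable (fun ω => ∑ n ∈ Finset.range k, ((ξ n ω).1 l)^2) :=
    Finset.measurable_sum _ fun n _ => (sw_mcoord hmeas n l).pow_const 2
  have hg1 : Integrable (fun ω => (k:ℝ) * ∑ n ∈ Finset.range k, ((ξ n ω).1 l)^4) μ :=
    (integrable_finset_sum _ fun n _ => sw_int_coord4 hmeas hident hx4 n l).const_mul _
  have hQpt : ∀ ω, (∑ n ∈ Finset.range k, ((ξ n ω).1 l)^2)^2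
      ≤ (k:ℝ) * ∑ n ∈ Finset.range k, ((ξ n ω).1 l)^4 := by
    intro ω
    have h := sq_sum_le_card_mul_sum_sq (s := Finset.range k) (f := fun n => ((ξ n ω).1 l)^2)
    have he : ∀ x : ℝ, (x^2)^2 = x^4 := fun x => by ring
    simp only [he, Finset.card_range] at h
    exact h
  have hQ2int : Integrable (fun ω => (∑ n ∈ Finset.range k, ((ξ n ω).1 l)^2)^2) μ := by
    refine hg1.mono ((hQm.pow_const 2).aestronglyMeasurable)
      (Filter.Eventually.of_forall fun ω => ?_)
    rw [Real.norm_eq_abs, Real.norm_eq_abs, abs_of_nonneg (by positivity),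
      abs_of_nonneg (by positivity : (0:ℝ) ≤ (k:ℝ) * ∑ n ∈ Finset.range k, ((ξ n ω).1 l)^4)]
    exact hQpt ω
  have hQ2val : ∫ ω, (∑ n ∈ Finset.range k, ((ξ n ω).1 l)^2)^2 ∂μ
      ≤ (k:ℝ)^2 * ∫ ω, ‖(ξ 0 ω).1‖ ^ 4 ∂μ := by
    calc ∫ ω, (∑ n ∈ Finset.range k, ((ξ n ω).1 l)^2)^2 ∂μ
        ≤ ∫ ω, (k:ℝ) * ∑ n ∈ Finset.range k, ((ξ n ω).1 l)^4 ∂μ :=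
          integral_mono_of_nonneg (Filter.Eventually.of_forall fun ω => by positivity) hg1
            (Filter.Eventually.of_forall hQpt)
      _ = (k:ℝ) * ∑ n ∈ Finset.range k, ∫ ω, ((ξ n ω).1 l)^4 ∂μ := by
          rw [integral_const_mul,
            integral_finset_sum _ fun n _ => sw_int_coord4 hmeas hident hx4 n l]
      _ ≤ (k:ℝ) * ∑ _n ∈ Finset.range k, ∫ ω, ‖(ξ 0 ω).1‖ ^ 4 ∂μ :=
          mul_le_mul_of_nonneg_left
            (Finset.sum_le_sum fun n _ => sw_val_coord4 hmeas hident hx4 n l)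
            (Nat.cast_nonneg k)
      _ = (k:ℝ)^2 * ∫ ω, ‖(ξ 0 ω).1‖ ^ 4 ∂μ := by
          rw [Finset.sum_const, Finset.card_range, nsmul_eq_mul]; ring
  have hsq : ∀ ω, (∑ n ∈ Finset.range k, (ξ n ω).1 l)^2
      = (∑ n ∈ Finset.range k, ((ξ n ω).1 l)^2)
        + 2 * ∑ p ∈ (Finset.range k).sigma (fun j => Finset.range j),
            (ξ p.2 ω).1 l * (ξ p.1 ω).1 l := by
    intro ω
    rw [sw_sq_sum (fun n => (ξ n ω).1 l) k, Finset.sum_sigma']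
  have hpt4 : ∀ ω, (∑ n ∈ Finset.range k, (ξ n ω).1 l)^4
      ≤ 2 * (∑ n ∈ Finset.range k, ((ξ n ω).1 l)^2)^2
        + 8 * (∑ p ∈ (Finset.range k).sigma (fun j => Finset.range j),
            (ξ p.2 ω).1 l * (ξ p.1 ω).1 l)^2 := by
    intro ω
    have h := hsq ω
    nlinarith [sq_nonneg ((∑ n ∈ Finset.range k, ((ξ n ω).1 l)^2)
      - 2 * ∑ p ∈ (Finset.range k).sigma (fun j => Finset.range j),
          (ξ p.2 ω).1 l * (ξ p.1 ω).1 l), h, sq_nonneg (∑ n ∈ Finset.range k, (ξ n ω).1 l)]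
  have hdom : Integrable (fun ω => 2 * (∑ n ∈ Finset.range k, ((ξ n ω).1 l)^2)^2
      + 8 * (∑ p ∈ (Finset.range k).sigma (fun j => Finset.range j),
          (ξ p.2 ω).1 l * (ξ p.1 ω).1 l)^2) μ := (hQ2int.const_mul 2).add (hP2.const_mul 8)
  have hSm : Measurable (fun ω => ∑ n ∈ Finset.range k, (ξ n ω).1 l) :=
    Finset.measurable_sum _ fun n _ => sw_mcoord hmeas n l
  constructor
  · refine hdom.mono ((hSm.pow_const 4).aestronglyMeasurable)
      (Filter.Eventually.of_forall fun ω => ?_)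
    rw [Real.norm_eq_abs, Real.norm_eq_abs, abs_of_nonneg (by positivity),
      abs_of_nonneg (by positivity : (0:ℝ) ≤ 2 * (∑ n ∈ Finset.range k, ((ξ n ω).1 l)^2)^2
        + 8 * (∑ p ∈ (Finset.range k).sigma (fun j => Finset.range j),
            (ξ p.2 ω).1 l * (ξ p.1 ω).1 l)^2)]
    exact hpt4 ω
  · calc ∫ ω, (∑ n ∈ Finset.range k, (ξ n ω).1 l)^4 ∂μ
        ≤ ∫ ω, (2 * (∑ n ∈ Finset.range k, ((ξ n ω).1 l)^2)^2
          + 8 * (∑ p ∈ (Finset.range k).sigma (fun j => Finset.range j),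
              (ξ p.2 ω).1 l * (ξ p.1 ω).1 l)^2) ∂μ :=
          integral_mono_of_nonneg (Filter.Eventually.of_forall fun ω => by positivity) hdom
            (Filter.Eventually.of_forall hpt4)
      _ = 2 * ∫ ω, (∑ n ∈ Finset.range k, ((ξ n ω).1 l)^2)^2 ∂μ
          + 8 * ∫ ω, (∑ p ∈ (Finset.range k).sigma (fun j => Finset.range j),
              (ξ p.2 ω).1 l * (ξ p.1 ω).1 l)^2 ∂μ := by
          rw [integral_add (hQ2int.const_mul 2) (hP2.const_mul 8), integral_const_mul,
            integral_const_mul]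
      _ ≤ 34 * (∫ ω, ‖(ξ 0 ω).1‖ ^ 4 ∂μ) * (k:ℝ)^2 := by nlinarith [hQ2val, hP2val]

lemma sw_S4_full (hmeas : ∀ n, Measurable (ξ n))
    (hindep : iIndepFun ξ μ)
    (hident : ∀ n, IdentDistrib (ξ n) (ξ 0) μ μ)
    (hcentered : ∀ l : Fin d, ∫ ω, (ξ 0 ω).1 l ∂μ = 0)
    (hx4 : Integrable (fun ω => ‖(ξ 0 ω).1‖ ^ 4) μ) (k : ℕ) :
    Integrable (fun ω => ‖∑ n ∈ Finset.range k, (ξ n ω).1‖^4) μ ∧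
      ∫ ω, ‖∑ n ∈ Finset.range k, (ξ n ω).1‖^4 ∂μ
        ≤ 34 * d * (∫ ω, ‖(ξ 0 ω).1‖ ^ 4 ∂μ) * (k:ℝ)^2 := by
  have hS4 := fun l => sw_S4 hmeas hindep hident hcentered hx4 k l
  have hdom : Integrable (fun ω => ∑ l : Fin d, (∑ n ∈ Finset.range k, (ξ n ω).1 l)^4) μ :=
    integrable_finset_sum _ fun l _ => (hS4 l).1
  have hpt : ∀ ω, ‖∑ n ∈ Finset.range k, (ξ n ω).1‖^4
      ≤ ∑ l : Fin d, (∑ n ∈ Finset.range k, (ξ n ω).1 l)^4 := by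
    intro ω
    refine (sw_pi_pow (∑ n ∈ Finset.range k, (ξ n ω).1) 4 (by norm_num)).trans
      (le_of_eq (Finset.sum_congr rfl fun l _ => ?_))
    rw [Real.norm_eq_abs, Finset.sum_apply, ← abs_pow,
      abs_of_nonneg (by positivity : (0:ℝ) ≤ (∑ n ∈ Finset.range k, (ξ n ω).1 l)^4)]
  have hSm : Measurable (fun ω => ∑ n ∈ Finset.range k, (ξ n ω).1) :=
    measurable_pi_lambda _ fun l => by
      simp only [Finset.sum_apply]
      exact Finset.measurable_sum _ fun n _ => sw_mcoord hmeas n l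
  constructor
  · refine hdom.mono ((hSm.norm.pow_const 4).aestronglyMeasurable)
      (Filter.Eventually.of_forall fun ω => ?_)
    rw [Real.norm_eq_abs, Real.norm_eq_abs, abs_of_nonneg (by positivity),
      abs_of_nonneg (by positivity : (0:ℝ)
        ≤ ∑ l : Fin d, (∑ n ∈ Finset.range k, (ξ n ω).1 l)^4)]
    exact hpt ω
  · calc ∫ ω, ‖∑ n ∈ Finset.range k, (ξ n ω).1‖^4 ∂μ
        ≤ ∫ ω, ∑ l : Fin d, (∑ n ∈ Finset.range k, (ξ n ω).1 l)^4 ∂μ :=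
          integral_mono_of_nonneg (Filter.Eventually.of_forall fun ω => by positivity) hdom
            (Filter.Eventually.of_forall hpt)
      _ = ∑ l : Fin d, ∫ ω, (∑ n ∈ Finset.range k, (ξ n ω).1 l)^4 ∂μ :=
          integral_finset_sum _ fun l _ => (hS4 l).1
      _ ≤ ∑ _l : Fin d, 34 * (∫ ω, ‖(ξ 0 ω).1‖ ^ 4 ∂μ) * (k:ℝ)^2 :=
          Finset.sum_le_sum fun l _ => (hS4 l).2
      _ = 34 * d * (∫ ω, ‖(ξ 0 ω).1‖ ^ 4 ∂μ) * (k:ℝ)^2 := by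
          rw [Finset.sum_const, Finset.card_univ, Fintype.card_fin, nsmul_eq_mul]; ring

end SW5

section SW6
variable {Ω : Type*} [MeasurableSpace Ω] {μ : Measure Ω} [IsProbabilityMeasure μ]
  {d : ℕ} {ξ : ℕ → Ω → (Fin d → ℝ) × (Fin d → Fin d → ℝ)}

lemma sw_G2 (hmeas : ∀ n, Measurable (ξ n))
    (hindep : iIndepFun ξ μ)
    (hident : ∀ n, IdentDistrib (ξ n) (ξ 0) μ μ)
    (hcentered : ∀ l : Fin d, ∫ ω, (ξ 0 ω).1 l ∂μ = 0)
    (hx4 : Integrable (fun ω => ‖(ξ 0 ω).1‖ ^ 4) μ)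
    (hA2 : Integrable (fun ω => ‖(ξ 0 ω).2‖ ^ 2) μ) (k : ℕ) :
    Integrable (fun ω => ‖(∑ n ∈ Finset.range k, (ξ n ω).2) + (1/2 : ℝ) •
        ∑ j ∈ Finset.range k, ∑ i ∈ Finset.range j,
          (outer (ξ i ω).1 (ξ j ω).1 - outer (ξ j ω).1 (ξ i ω).1)‖^2) μ ∧
      ∫ ω, ‖(∑ n ∈ Finset.range k, (ξ n ω).2) + (1/2 : ℝ) •
        ∑ j ∈ Finset.range k, ∑ i ∈ Finset.range j,
          (outer (ξ i ω).1 (ξ j ω).1 - outer (ξ j ω).1 (ξ i ω).1)‖^2 ∂μ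
        ≤ (2 * (∫ ω, ‖(ξ 0 ω).2‖ ^ 2 ∂μ)
            + 4 * d^2 * ∫ ω, ‖(ξ 0 ω).1‖ ^ 4 ∂μ) * (k:ℝ)^2 := by
  set T : Ω → Fin d → Fin d → ℝ := fun ω => ∑ j ∈ Finset.range k, ∑ i ∈ Finset.range j,
    (outer (ξ i ω).1 (ξ j ω).1 - outer (ξ j ω).1 (ξ i ω).1) with hTdef
  set SA : Ω → Fin d → Fin d → ℝ := fun ω => ∑ n ∈ Finset.range k, (ξ n ω).2 with hSAdef
  have hTentry : ∀ (ω : Ω) (l m : Fin d), T ω l m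
      = ∑ p ∈ (Finset.range k).sigma (fun j => Finset.range j),
          ((ξ p.2 ω).1 l * (ξ p.1 ω).1 m - (ξ p.2 ω).1 m * (ξ p.1 ω).1 l) := by
    intro ω l m
    rw [hTdef]
    simp only [Finset.sum_apply, Pi.sub_apply, outer]
    rw [Finset.sum_sigma']
    exact Finset.sum_congr rfl fun p _ => by ring
  have hasym := fun l m => sw_asymZ_sum hmeas hindep hident hcentered hx4 k l m
  have hTint : ∀ l m : Fin d, Integrable (fun ω => (T ω l m)^2) μ := by
    intro l m
    have hfun : (fun ω => (T ω l m)^2)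
        = fun ω => (∑ p ∈ (Finset.range k).sigma (fun j => Finset.range j),
            ((ξ p.2 ω).1 l * (ξ p.1 ω).1 m - (ξ p.2 ω).1 m * (ξ p.1 ω).1 l))^2 :=
      funext fun ω => by rw [hTentry]
    rw [hfun]
    exact (hasym l m).1
  have hTval : ∀ l m : Fin d, ∫ ω, (T ω l m)^2 ∂μ
      ≤ (k:ℝ)^2 * (4 * ∫ ω, ‖(ξ 0 ω).1‖ ^ 4 ∂μ) := by
    intro l m
    have hfun : (fun ω => (T ω l m)^2)
        = fun ω => (∑ p ∈ (Finset.range k).sigma (fun j => Finset.range j),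
            ((ξ p.2 ω).1 l * (ξ p.1 ω).1 m - (ξ p.2 ω).1 m * (ξ p.1 ω).1 l))^2 :=
      funext fun ω => by rw [hTentry]
    rw [hfun]
    exact (hasym l m).2
  have hTm : Measurable T := by
    refine measurable_pi_lambda _ fun l => measurable_pi_lambda _ fun m => ?_
    have hfun : (fun ω => T ω l m)
        = fun ω => ∑ p ∈ (Finset.range k).sigma (fun j => Finset.range j),
            ((ξ p.2 ω).1 l * (ξ p.1 ω).1 m - (ξ p.2 ω).1 m * (ξ p.1 ω).1 l) :=
      funext fun ω => by rw [hTentry]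
    rw [hfun]
    exact Finset.measurable_sum _ fun p _ =>
      ((sw_mcoord hmeas p.2 l).mul (sw_mcoord hmeas p.1 m)).sub
        ((sw_mcoord hmeas p.2 m).mul (sw_mcoord hmeas p.1 l))
  have hSAm : Measurable SA := by
    refine measurable_pi_lambda _ fun l => measurable_pi_lambda _ fun m => ?_
    have hfun : (fun ω => SA ω l m) = fun ω => ∑ n ∈ Finset.range k, (ξ n ω).2 l m :=
      funext fun ω => by rw [hSAdef]; simp [Finset.sum_apply]
    rw [hfun]
    exact Finset.measurable_sum _ fun n _ =>
      (measurable_pi_apply m).comp ((measurable_pi_apply l).comp (measurable_snd.comp (hmeas n)))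
  have hΓm : Measurable (fun ω => SA ω + (1/2 : ℝ) • T ω) := by fun_prop
  set G : Ω → ℝ := fun ω => 2 * ((k:ℝ) * ∑ n ∈ Finset.range k, ‖(ξ n ω).2‖^2)
    + ∑ l : Fin d, ∑ m : Fin d, (T ω l m)^2 with hGdef
  have hGint : Integrable G μ := by
    refine (((integrable_finset_sum _ fun n _ =>
      sw_int_A2 hident hA2 n).const_mul ((k:ℝ))).const_mul 2).add ?_
    exact integrable_finset_sum _ fun l _ => integrable_finset_sum _ fun m _ => hTint l m
  have hGpt : ∀ ω, ‖SA ω + (1/2 : ℝ) • T ω‖^2 ≤ G ω := by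
    intro ω
    have htri : ‖SA ω + (1/2 : ℝ) • T ω‖ ≤ ‖SA ω‖ + (1/2) * ‖T ω‖ := by
      refine (norm_add_le _ _).trans ?_
      rw [norm_smul, Real.norm_eq_abs]
      rw [show |(1/2 : ℝ)| = 1/2 from abs_of_nonneg (by norm_num)]
    have hΓ2 : ‖SA ω + (1/2 : ℝ) • T ω‖^2 ≤ (‖SA ω‖ + (1/2) * ‖T ω‖)^2 :=
      pow_le_pow_left₀ (norm_nonneg _) htri 2
    have hSAb : ‖SA ω‖^2 ≤ (k:ℝ) * ∑ n ∈ Finset.range k, ‖(ξ n ω).2‖^2 := by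
      have h1 : ‖SA ω‖ ≤ ∑ n ∈ Finset.range k, ‖(ξ n ω).2‖ := by
        rw [hSAdef]; exact norm_sum_le _ _
      have h2 : (∑ n ∈ Finset.range k, ‖(ξ n ω).2‖)^2
          ≤ (k:ℝ) * ∑ n ∈ Finset.range k, ‖(ξ n ω).2‖^2 := by
        have h := sq_sum_le_card_mul_sum_sq (s := Finset.range k)
          (f := fun n => ‖(ξ n ω).2‖)
        simpa [Finset.card_range] using h
      exact (pow_le_pow_left₀ (norm_nonneg _) h1 2).trans h2
    have hTb : ‖T ω‖^2 ≤ ∑ l : Fin d, ∑ m : Fin d, (T ω l m)^2 := by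
      refine (sw_pi_pow (T ω) 2 (by norm_num)).trans (Finset.sum_le_sum fun l _ => ?_)
      refine (sw_pi_pow (T ω l) 2 (by norm_num)).trans (le_of_eq ?_)
      exact Finset.sum_congr rfl fun m _ => by rw [Real.norm_eq_abs, sq_abs]
    rw [hGdef]
    nlinarith [sq_nonneg (‖SA ω‖ - (1/2) * ‖T ω‖), sq_nonneg ‖T ω‖]
  constructor
  · refine hGint.mono ((hΓm.norm.pow_const 2).aestronglyMeasurable)
      (Filter.Eventually.of_forall fun ω => ?_)
    rw [Real.norm_eq_abs, Real.norm_eq_abs, abs_of_nonneg (by positivity : (0:ℝ) ≤ ‖SA ω + (1/2 : ℝ) • T ω‖^2)]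
    refine (hGpt ω).trans (le_abs_self _)
  · calc ∫ ω, ‖SA ω + (1/2 : ℝ) • T ω‖^2 ∂μ ≤ ∫ ω, G ω ∂μ :=
        integral_mono_of_nonneg (Filter.Eventually.of_forall fun ω => by positivity) hGint
          (Filter.Eventually.of_forall hGpt)
    _ = 2 * ((k:ℝ) * ∑ n ∈ Finset.range k, ∫ ω, ‖(ξ n ω).2‖^2 ∂μ)
        + ∑ l : Fin d, ∑ m : Fin d, ∫ ω, (T ω l m)^2 ∂μ := by
        rw [hGdef]
        rw [integral_add (((integrable_finset_sum _ fun n _ =>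
          sw_int_A2 hident hA2 n).const_mul ((k:ℝ))).const_mul 2)
          (integrable_finset_sum _ fun l _ => integrable_finset_sum _ fun m _ => hTint l m)]
        rw [integral_const_mul, integral_const_mul,
          integral_finset_sum _ fun n _ => sw_int_A2 hident hA2 n,
          integral_finset_sum _ fun l _ => integrable_finset_sum _ fun m _ => hTint l m]
        congr 1
        exact Finset.sum_congr rfl fun l _ =>
          integral_finset_sum _ fun m _ => hTint l m
    _ ≤ 2 * ((k:ℝ) * ∑ _n ∈ Finset.range k, ∫ ω, ‖(ξ 0 ω).2‖^2 ∂μ)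
        + ∑ _l : Fin d, ∑ _m : Fin d, (k:ℝ)^2 * (4 * ∫ ω, ‖(ξ 0 ω).1‖ ^ 4 ∂μ) := by
        gcongr 2 * ((k:ℝ) * ?_) + ?_
        · exact le_of_eq (Finset.sum_congr rfl fun n _ => sw_val_A2 hident n)
        · exact Finset.sum_le_sum fun l _ => Finset.sum_le_sum fun m _ => hTval l m
    _ = (2 * (∫ ω, ‖(ξ 0 ω).2‖ ^ 2 ∂μ)
        + 4 * d^2 * ∫ ω, ‖(ξ 0 ω).1‖ ^ 4 ∂μ) * (k:ℝ)^2 := by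
        rw [Finset.sum_const, Finset.card_range, nsmul_eq_mul, Finset.sum_const,
          Finset.sum_const, Finset.card_univ, Fintype.card_fin, nsmul_eq_mul, nsmul_eq_mul]
        ring

end SW6


theorem step2_walk_moment_bound
    {Ω : Type*} [MeasurableSpace Ω] (μ : Measure Ω) [IsProbabilityMeasure μ]
    (d : ℕ) (ξ : ℕ → Ω → (Fin d → ℝ) × (Fin d → Fin d → ℝ))
    (hmeas : ∀ n, Measurable (ξ n))
    (hindep : iIndepFun ξ μ)
    (hident : ∀ n, IdentDistrib (ξ n) (ξ 0) μ μ)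
    (hcentered : ∀ l : Fin d, ∫ ω, (ξ 0 ω).1 l ∂μ = 0)
    (hx4 : Integrable (fun ω => ‖(ξ 0 ω).1‖ ^ 4) μ)
    (hA2 : Integrable (fun ω => ‖(ξ 0 ω).2‖ ^ 2) μ)
    (W : ℕ → Ω → (Fin d → ℝ) × (Fin d → Fin d → ℝ))
    (hW : ∀ k ω, W k ω = ((List.range k).map (fun n => ξ n ω)).foldl gmul (0, 0)) :
    ∃ C : ℝ, ∀ k : ℕ, 1 ≤ k →
      (∫ ω, ‖(W k ω).1‖ ^ 4 ∂μ) ≤ C * (k : ℝ) ^ 2 ∧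
      (∫ ω, ‖(W k ω).2‖ ^ 2 ∂μ) ≤ C * (k : ℝ) ^ 2 ∧
      (∫ ω, gnorm (W k ω) ^ 4 ∂μ) ≤ C * (k : ℝ) ^ 2 := by
  classical
  set c4 := ∫ ω, ‖(ξ 0 ω).1‖ ^ 4 ∂μ with hc4
  set cA2 := ∫ ω, ‖(ξ 0 ω).2‖ ^ 2 ∂μ with hcA2
  have hc4n : 0 ≤ c4 := integral_nonneg fun ω => by positivity
  have hcA2n : 0 ≤ cA2 := integral_nonneg fun ω => by positivity
  refine ⟨34 * d * c4 + (2 * cA2 + 4 * (d:ℝ)^2 * c4), fun k hk => ?_⟩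
  have hkn : (0:ℝ) ≤ (k:ℝ)^2 := by positivity
  have hq1 : 0 ≤ 4 * (d:ℝ)^2 * c4 := mul_nonneg (by positivity) hc4n
  have hq2 : (0:ℝ) ≤ 2 * cA2 + 4 * (d:ℝ)^2 * c4 := by linarith
  have hq3 : (0:ℝ) ≤ 34 * (d:ℝ) * c4 := mul_nonneg (by positivity) hc4n
  have hSfull := sw_S4_full hmeas hindep hident hcentered hx4 k
  have hGfull := sw_G2 hmeas hindep hident hcentered hx4 hA2 k
  have e1 : ∫ ω, ‖(W k ω).1‖ ^ 4 ∂μ = ∫ ω, ‖∑ n ∈ Finset.range k, (ξ n ω).1‖^4 ∂μ := by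
    apply integral_congr_ae
    exact Filter.Eventually.of_forall fun ω => by beta_reduce; rw [sw_W W hW k ω]
  have e2 : ∫ ω, ‖(W k ω).2‖ ^ 2 ∂μ
      = ∫ ω, ‖(∑ n ∈ Finset.range k, (ξ n ω).2) + (1/2 : ℝ) •
          ∑ j ∈ Finset.range k, ∑ i ∈ Finset.range j,
            (outer (ξ i ω).1 (ξ j ω).1 - outer (ξ j ω).1 (ξ i ω).1)‖^2 ∂μ := by
    apply integral_congr_ae
    exact Filter.Eventually.of_forall fun ω => by beta_reduce; rw [sw_W W hW k ω]
  refine ⟨?_, ?_, ?_⟩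
  · rw [e1]
    nlinarith [hSfull.2, mul_nonneg hq2 hkn]
  · rw [e2]
    nlinarith [hGfull.2, mul_nonneg hq3 hkn]
  · have hpt : ∀ ω, gnorm (W k ω) ^ 4
        ≤ ‖∑ n ∈ Finset.range k, (ξ n ω).1‖^4
          + ‖(∑ n ∈ Finset.range k, (ξ n ω).2) + (1/2 : ℝ) •
              ∑ j ∈ Finset.range k, ∑ i ∈ Finset.range j,
                (outer (ξ i ω).1 (ξ j ω).1 - outer (ξ j ω).1 (ξ i ω).1)‖^2 := by
      intro ω
      rw [sw_W W hW k ω]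
      simp only [gnorm]
      set a := ‖∑ n ∈ Finset.range k, (ξ n ω).1‖ with ha
      set t := ‖(∑ n ∈ Finset.range k, (ξ n ω).2) + (1/2 : ℝ) •
          ∑ j ∈ Finset.range k, ∑ i ∈ Finset.range j,
            (outer (ξ i ω).1 (ξ j ω).1 - outer (ξ j ω).1 (ξ i ω).1)‖ with ht
    
      have hs : Real.sqrt t ^ 4 = t ^ 2 := by
        rw [show (4:ℕ) = 2*2 from rfl, pow_mul, Real.sq_sqrt (norm_nonneg _)]
      have hmax : (max a (Real.sqrt t)) ^ 4 ≤ a^4 + Real.sqrt t ^ 4 := by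
        rcases max_cases a (Real.sqrt t) with ⟨h, _⟩ | ⟨h, _⟩ <;> rw [h] <;>
          nlinarith [sq_nonneg (a^2), sq_nonneg (Real.sqrt t ^ 2)]
      calc (max a (Real.sqrt t)) ^ 4 ≤ a^4 + Real.sqrt t ^ 4 := hmax
        _ = a^4 + t^2 := by rw [hs]
    have hdomI : Integrable (fun ω => ‖∑ n ∈ Finset.range k, (ξ n ω).1‖^4
        + ‖(∑ n ∈ Finset.range k, (ξ n ω).2) + (1/2 : ℝ) •
            ∑ j ∈ Finset.range k, ∑ i ∈ Finset.range j,
              (outer (ξ i ω).1 (ξ j ω).1 - outer (ξ j ω).1 (ξ i ω).1)‖^2) μ :=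
      hSfull.1.add hGfull.1
    have hgn : ∀ ω, (0:ℝ) ≤ gnorm (W k ω) ^ 4 := by
      intro ω
      have h0 : (0:ℝ) ≤ gnorm (W k ω) :=
        le_trans (norm_nonneg ((W k ω).1)) (le_max_left _ _)
      positivity
    calc ∫ ω, gnorm (W k ω) ^ 4 ∂μ
        ≤ ∫ ω, (‖∑ n ∈ Finset.range k, (ξ n ω).1‖^4
          + ‖(∑ n ∈ Finset.range k, (ξ n ω).2) + (1/2 : ℝ) •
              ∑ j ∈ Finset.range k, ∑ i ∈ Finset.range j,
                (outer (ξ i ω).1 (ξ j ω).1 - outer (ξ j ω).1 (ξ i ω).1)‖^2) ∂μ :=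
          integral_mono_of_nonneg (Filter.Eventually.of_forall hgn) hdomI
            (Filter.Eventually.of_forall hpt)
      _ = (∫ ω, ‖∑ n ∈ Finset.range k, (ξ n ω).1‖^4 ∂μ)
          + ∫ ω, ‖(∑ n ∈ Finset.range k, (ξ n ω).2) + (1/2 : ℝ) •
              ∑ j ∈ Finset.range k, ∑ i ∈ Finset.range j,
                (outer (ξ i ω).1 (ξ j ω).1 - outer (ξ j ω).1 (ξ i ω).1)‖^2 ∂μ :=
          integral_add hSfull.1 hGfull.1
      _ ≤ 34 * d * c4 * (k:ℝ)^2 + (2 * cA2 + 4 * (d:ℝ)^2 * c4) * (k:ℝ)^2 := by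
          have h1 := hSfull.2
          have h2 := hGfull.2
          nlinarith [h1, h2]
      _ = (34 * d * c4 + (2 * cA2 + 4 * (d:ℝ)^2 * c4)) * (k:ℝ)^2 := by ring
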